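/- For all nonnegative integers α and β, the half-space integration-by-parts identity I(α+1, β+1) = −He_{α+1}(0)·He_β(0) + (α+1)·I(α,β) holds. -/

import Mathlib

open MeasureTheory Real

/-- The probabilist's Hermite polynomial evaluated at a real number. -/
noncomputable def He (n : ℕ) (x : ℝ) : ℝ := Polynomial.aeval x (Polynomial.hermite n)

/-- The half-space Hermite-Gaussian integral `I(α,β)`. -/
noncomputable def I (a b : ℕ) : ℝ :=
  ∫ x in Set.Iic (0 : ℝ), He a x * He b x * Real.exp (-x ^ 2 / 2)

open Polynomial Filter Asymptotics Set in
private lemma deriv_hermite_aux (n : ℕ) :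
    derivative (hermite (n + 1)) = C ((n : ℤ) + 1) * hermite n := by
  induction n with
  | zero => simp [hermite_one, hermite_zero]
  | succ n ih =>
    rw [hermite_succ (n + 1), derivative_sub, derivative_mul, derivative_X, one_mul, ih,
      derivative_mul, derivative_C, zero_mul, zero_add, hermite_succ n]
    have hc : C (((n + 1 : ℕ) : ℤ) + 1) = C ((n : ℤ) + 1) + 1 := by
      rw [show (((n + 1 : ℕ) : ℤ) + 1) = ((n : ℤ) + 1) + 1 by push_cast; ring, C_add, C_1]
    rw [hc]
    ring

open Polynomial Filter Asymptotics Set in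
private lemma hasDerivAt_He_succ (n : ℕ) (x : ℝ) :
    HasDerivAt (He (n + 1)) (((n : ℝ) + 1) * He n x) x := by
  have h := (hermite (n + 1)).hasDerivAt_aeval (x := x)
  rw [deriv_hermite_aux n] at h
  have h2 : ((n : ℝ) + 1) * He n x = aeval x (C ((n : ℤ) + 1) * hermite n) := by
    simp [He, map_mul, aeval_C]
  rw [h2]
  exact h

open Polynomial Filter Asymptotics Set in
private lemma hasDerivAt_gauss (x : ℝ) :
    HasDerivAt (fun y : ℝ => Real.exp (-y ^ 2 / 2)) (-x * Real.exp (-x ^ 2 / 2)) x := by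
  have h1 : HasDerivAt (fun y : ℝ => -y ^ 2 / 2) (-x) x := by
    have h : HasDerivAt (fun y : ℝ => -y ^ 2 / 2) (-(↑(2:ℕ) * x ^ (2 - 1)) / 2) x :=
      ((hasDerivAt_pow 2 x).neg).div_const 2
    convert h using 1
    push_cast
    ring
  convert h1.exp using 1
  ring

open Polynomial Filter Asymptotics Set in
private lemma aeval_mul_gauss_isBigO (p : Polynomial ℤ) :
    (fun x : ℝ => (aeval x p : ℝ) * Real.exp (-x ^ 2 / 2)) =O[atTop]
      fun x : ℝ => Real.exp (-(1 / 2) * x) := by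
  set P : Polynomial ℝ := p.map (algebraMap ℤ ℝ) with hP
  have hev : ∀ x : ℝ, (aeval x p : ℝ) = eval x P := by
    intro x; rw [hP, aeval_def, eval₂_eq_eval_map]
  have h1 : (fun x : ℝ => eval x P) =O[atTop] fun x => eval x (X ^ P.natDegree : ℝ[X]) := by
    apply Polynomial.isBigO_of_degree_le
    simpa using Polynomial.degree_le_natDegree
  have h2 : (fun x : ℝ => eval x P * Real.exp (-x ^ 2 / 2)) =O[atTop]
      fun x => x ^ P.natDegree * Real.exp (-x ^ 2 / 2) := by
    simpa using h1.mul (isBigO_refl (fun x : ℝ => Real.exp (-x ^ 2 / 2)) atTop)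
  have h3 : (fun x : ℝ => x ^ P.natDegree * Real.exp (-x ^ 2 / 2)) =O[atTop]
      fun x : ℝ => Real.exp (-(1 / 2) * x) := by
    have := (rpow_mul_exp_neg_mul_sq_isLittleO_exp_neg (b := 1 / 2) (by norm_num)
      (P.natDegree : ℝ)).isBigO
    refine this.congr' ?_ EventuallyEq.rfl
    filter_upwards [eventually_gt_atTop (0 : ℝ)] with x hx
    rw [Real.rpow_natCast]
    congr 1
    congr 1
    ring
  simp only [hev]
  exact h2.trans h3

open Polynomial Filter Asymptotics Set in
private lemma integrableOn_aeval_mul_gauss_Ici (p : Polynomial ℤ) :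
    IntegrableOn (fun x : ℝ => (aeval x p : ℝ) * Real.exp (-x ^ 2 / 2)) (Ici 0) := by
  have hcont : Continuous fun x : ℝ => (aeval x p : ℝ) * Real.exp (-x ^ 2 / 2) := by
    exact (Polynomial.continuous_aeval p).mul (Real.continuous_exp.comp (by continuity))
  refine LocallyIntegrableOn.integrableOn_of_isBigO_atTop
    (hcont.locallyIntegrable.locallyIntegrableOn _) (aeval_mul_gauss_isBigO p) ?_
  exact ⟨Ioi 0, Ioi_mem_atTop 0, exp_neg_integrableOn_Ioi 0 (by norm_num)⟩

open Polynomial Filter Asymptotics Set in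
private lemma aeval_neg_eq (p : Polynomial ℤ) (x : ℝ) :
    (aeval (-x) p : ℝ) = aeval x (p.comp (-X)) := by
  rw [show (aeval x (p.comp (-X)) : ℝ) = aeval (aeval x (-X : Polynomial ℤ)) p from
    (aeval_comp x (p := p) (q := -X) ▸ rfl)]
  simp

open Polynomial Filter Asymptotics Set in
private lemma integrableOn_aeval_mul_gauss_Iic (p : Polynomial ℤ) :
    IntegrableOn (fun x : ℝ => (aeval x p : ℝ) * Real.exp (-x ^ 2 / 2)) (Iic 0) := by
  rw [← (Measure.measurePreserving_neg (volume : Measure ℝ)).integrableOn_comp_preimage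
      (Homeomorph.neg ℝ).measurableEmbedding]
  have : (Neg.neg ⁻¹' Iic (0 : ℝ)) = Ici 0 := by
    ext x; simp
  rw [this]
  have := integrableOn_aeval_mul_gauss_Ici (p.comp (-X))
  refine this.congr_fun (fun x _ => ?_) measurableSet_Ici
  simp only [Function.comp]
  rw [← aeval_neg_eq]
  ring_nf

open Polynomial Filter Asymptotics Set in
private lemma integrable_He_mul_gauss (a b : ℕ) :
    IntegrableOn (fun x : ℝ => He a x * He b x * Real.exp (-x ^ 2 / 2)) (Iic 0) := by
  have := integrableOn_aeval_mul_gauss_Iic (hermite a * hermite b)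
  refine this.congr_fun (fun x _ => ?_) measurableSet_Iic
  simp [He, map_mul]

open Polynomial Filter Asymptotics Set in
private lemma tendsto_He_mul_gauss (a b : ℕ) :
    Tendsto (fun x : ℝ => He a x * He b x * Real.exp (-x ^ 2 / 2)) atBot (nhds 0) := by
  set p : Polynomial ℤ := hermite a * hermite b with hp
  set q : Polynomial ℤ := p.comp (-X) with hq
  have h1 : Tendsto (fun x : ℝ => (aeval x q : ℝ) * Real.exp (-x ^ 2 / 2)) atTop (nhds 0) := by
    refine (aeval_mul_gauss_isBigO q).trans_tendsto ?_
    have : Tendsto (fun x : ℝ => -(1 / 2) * x) atTop atBot := by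
      exact Tendsto.const_mul_atTop_of_neg (by norm_num) tendsto_id
    exact Real.tendsto_exp_atBot.comp this
  have h2 := h1.comp tendsto_neg_atBot_atTop
  refine h2.congr fun x => ?_
  simp only [Function.comp]
  rw [← aeval_neg_eq]
  simp only [neg_neg, hp]
  rw [show (aeval x (hermite a * hermite b) : ℝ) = He a x * He b x by simp [He, map_mul]]
  ring_nf

theorem I_succ_succ (α β : ℕ) :
    I (α + 1) (β + 1) = -(He (α + 1) 0 * He β 0) + (α + 1) * I α β := by
  classical
  set F : ℝ → ℝ := fun x => He (α + 1) x * He β x * Real.exp (-x ^ 2 / 2) with hF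
  set F' : ℝ → ℝ := fun x =>
    ((α : ℝ) + 1) * (He α x * He β x * Real.exp (-x ^ 2 / 2))
      - He (α + 1) x * He (β + 1) x * Real.exp (-x ^ 2 / 2) with hF'
  have hderiv : ∀ x ∈ Set.Iic (0 : ℝ), HasDerivAt F (F' x) x := by
    intro x _
    have h1 := hasDerivAt_He_succ α x
    have h2 : HasDerivAt (He β) (Polynomial.aeval x (Polynomial.derivative (Polynomial.hermite β))) x := by
      exact (Polynomial.hermite β).hasDerivAt_aeval (x := x)
    have h3 := hasDerivAt_gauss x
    have h4 : HasDerivAt F _ x := (h1.mul h2).mul h3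
    have hrec : He (β + 1) x =
        x * He β x - Polynomial.aeval x (Polynomial.derivative (Polynomial.hermite β)) := by
      simp [He, Polynomial.hermite_succ, map_mul]
    convert h4 using 1
    rw [hF']
    simp only []
    rw [hrec]
    simp only [Pi.mul_apply]
    ring
  have f'int : IntegrableOn F' (Set.Iic (0 : ℝ)) := by
    have i1 := integrable_He_mul_gauss α β
    have i2 := integrable_He_mul_gauss (α + 1) (β + 1)
    exact (i1.const_mul _).sub i2
  have htends : Filter.Tendsto F Filter.atBot (nhds 0) := tendsto_He_mul_gauss (α + 1) β
  have key := MeasureTheory.integral_Iic_of_hasDerivAt_of_tendsto' hderiv f'int htends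
  rw [sub_zero] at key
  have hsplit : ∫ x in Set.Iic (0 : ℝ), F' x
      = ((α : ℝ) + 1) * I α β - I (α + 1) (β + 1) := by
    rw [hF']
    rw [MeasureTheory.integral_sub ((integrable_He_mul_gauss α β).const_mul _)
      (integrable_He_mul_gauss (α + 1) (β + 1))]
    rw [MeasureTheory.integral_const_mul]
    rfl
  have hF0 : F 0 = He (α + 1) 0 * He β 0 := by
    simp [hF]
  rw [hsplit, hF0] at key
  push_cast
  linarith
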